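/- Let Γⁱ_{ij} (i≠j) be functions on an open subset of ℂⁿ with canonical coordinates u¹,…,uⁿ, and define the natural connection ∇⁽¹⁾ and dual connection ∇⁽²⁾ by: Γ⁽¹⁾ⁱ_{jk}=Γ⁽²⁾ⁱ_{jk}=0 for distinct i,j,k; Γ⁽¹⁾ⁱ_{ij}=Γ⁽²⁾ⁱ_{ij}=Γⁱ_{ij} for i≠j; Γ⁽¹⁾ⁱ_{jj}=-Γⁱ_{ij}, Γ⁽²⁾ⁱ_{jj}=-(uⁱ/uʲ)Γⁱ_{ij} for i≠j; Γ⁽¹⁾ⁱ_{ii}=-Σ_{l≠i}Γⁱ_{li}, Γ⁽²⁾ⁱ_{ii}=-Σ_{l≠i}(uˡ/uⁱ)Γⁱ_{li} - 1/uⁱ. Assume ∇⁽¹⁾ is flat, i.e. conditions ∂_jΓⁱ_{ik}+Γⁱ_{ij}Γⁱ_{ik}-Γⁱ_{ik}Γᵏ_{kj}-Γⁱ_{ij}Γʲ_{jk}=0 for distinct i,j,k, and Σ_l ∂_l Γⁱ_{ik}=0 hold. Then the condition E^l ∂_l Γⁱ_{ik} = -Γⁱ_{ik}, with E = Σ_k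 u^k ∂_k, is equivalent to ∇⁽¹⁾∇⁽¹⁾E = 0. -/

import Mathlib

open scoped BigOperators

/-- Partial derivative in the `i`-th coordinate direction on `ℂⁿ`. -/
noncomputable def pd {n : ℕ} (i : Fin n) (f : (Fin n → ℂ) → ℂ) (p : Fin n → ℂ) : ℂ :=
  fderiv ℂ f p (Pi.single i 1)

/-- Second partial derivative `∂_i ∂_j f`. -/
noncomputable def sd {n : ℕ} (i j : Fin n) (f : (Fin n → ℂ) → ℂ) (p : Fin n → ℂ) : ℂ :=
  pd i (pd j f) p

lemma pd_coord {n : ℕ} (l i : Fin n) (p : Fin n → ℂ) :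
    pd l (fun q => q i) p = if i = l then (1:ℂ) else 0 := by
  have h : (fun q : Fin n → ℂ => q i)
      = ⇑(ContinuousLinearMap.proj (R := ℂ) (φ := fun _ : Fin n => ℂ) i) := rfl
  simp only [pd, h, ContinuousLinearMap.fderiv, ContinuousLinearMap.proj_apply,
    Pi.single_apply]

lemma pd_const {n : ℕ} (l : Fin n) (c : ℂ) (p : Fin n → ℂ) : pd l (fun _ => c) p = 0 := by
  simp [pd]

lemma sd_coord {n : ℕ} (k j i : Fin n) (p : Fin n → ℂ) :
    sd k j (fun q => q i) p = 0 := by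
  have h : pd j (fun q : Fin n → ℂ => q i) = fun _ => if i = j then (1:ℂ) else 0 :=
    funext fun q => pd_coord j i q
  simp only [sd, h, pd_const]

lemma pd_neg {n : ℕ} (l : Fin n) (f : (Fin n → ℂ) → ℂ) (p : Fin n → ℂ) :
    pd l (fun q => -(f q)) p = -(pd l f p) := by
  simp only [pd]
  rw [fderiv_fun_neg]
  simp

lemma pd_sum {n : ℕ} (l : Fin n) {ι : Type*} (s : Finset ι)
    (f : ι → (Fin n → ℂ) → ℂ) (p : Fin n → ℂ)
    (h : ∀ m ∈ s, DifferentiableAt ℂ (f m) p) :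
    pd l (fun q => ∑ m ∈ s, f m q) p = ∑ m ∈ s, pd l (f m) p := by
  simp only [pd]
  rw [fderiv_fun_sum h]
  simp

/-- In canonical coordinates `u¹,…,uⁿ`, let the natural connection `∇⁽¹⁾` be built from
the functions `Γⁱ_{ij}` (`i ≠ j`) by `Γ⁽¹⁾ⁱ_{jk}=0` for distinct `i,j,k`,
`Γ⁽¹⁾ⁱ_{ij}=Γⁱ_{ij}`, `Γ⁽¹⁾ⁱ_{jj}=-Γⁱ_{ij}` (`i≠j`), `Γ⁽¹⁾ⁱ_{ii}=-Σ_{l≠i}Γⁱ_{li}`.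
Assume the flatness conditions (curv1) and (curv2) for `∇⁽¹⁾`.  Then the condition
(curv3) `E^l ∂_l Γⁱ_{ik} = -Γⁱ_{ik}` (with `E = Σ_k u^k ∂_k`) is equivalent to
`∇⁽¹⁾∇⁽¹⁾E = 0`, where `(∇∇E)^i_{kj} = ∂_k∂_j E^i + Γ^i_{jl}∂_k E^l + Γ^i_{km}∂_j E^m
- Γ^m_{kj}∂_m E^i + E^l∂_lΓ^i_{kj}`. -/
theorem curv3_iff_nabla_nabla_E (n : ℕ)
    (γ : Fin n → Fin n → (Fin n → ℂ) → ℂ)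
    (hdiff : ∀ i j, Differentiable ℂ (γ i j))
    (G1 : Fin n → Fin n → Fin n → (Fin n → ℂ) → ℂ)
    -- the Christoffel symbols of the natural connection in canonical coordinates
    (hG1 : ∀ (i j k : Fin n) (p : Fin n → ℂ),
      G1 i j k p =
        if j = i ∧ k = i then -∑ l ∈ Finset.univ.erase i, γ i l p
        else if j = i then γ i k p
        else if k = i then γ i j p
        else if j = k then -(γ i j p)
        else 0)
    -- flatness condition (curv1)
    (hcurv1 : ∀ (p : Fin n → ℂ) (i j k : Fin n), i ≠ j → j ≠ k → i ≠ k →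
      pd j (γ i k) p + γ i j p * γ i k p - γ i k p * γ k j p - γ i j p * γ j k p = 0)
    -- flatness condition (curv2): e^l ∂_l Γⁱ_{ik} = 0 with e = Σ_k ∂_k
    (hcurv2 : ∀ (p : Fin n → ℂ) (i k : Fin n), i ≠ k → (∑ l, pd l (γ i k) p) = 0) :
    -- (curv3)  ⟺  ∇⁽¹⁾∇⁽¹⁾E = 0, where E^i(u) = u^i
    (∀ (p : Fin n → ℂ) (i k : Fin n), i ≠ k →
        (∑ l, p l * pd l (γ i k) p) = -(γ i k p))
    ↔ (∀ (p : Fin n → ℂ) (i k j : Fin n),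
        sd k j (fun q => q i) p
          + (∑ l, G1 i j l p * pd k (fun q => q l) p)
          + (∑ m, G1 i k m p * pd j (fun q => q m) p)
          - (∑ m, G1 m k j p * pd m (fun q => q i) p)
          + (∑ l, p l * pd l (G1 i k j) p) = 0) := by
  have hGfun : ∀ i j k, G1 i j k = fun p =>
      if j = i ∧ k = i then -∑ l ∈ Finset.univ.erase i, γ i l p
      else if j = i then γ i k p
      else if k = i then γ i j p
      else if j = k then -(γ i j p)
      else 0 := fun i j k => funext fun p => hG1 i j k p
  have key : ∀ (p : Fin n → ℂ) (i k j : Fin n),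
      sd k j (fun q => q i) p
        + (∑ l, G1 i j l p * pd k (fun q => q l) p)
        + (∑ m, G1 i k m p * pd j (fun q => q m) p)
        - (∑ m, G1 m k j p * pd m (fun q => q i) p)
        + (∑ l, p l * pd l (G1 i k j) p)
      = G1 i j k p + (∑ l, p l * pd l (G1 i k j) p) := by
    intro p i k j
    rw [sd_coord]
    have h1 : (∑ l, G1 i j l p * pd k (fun q => q l) p) = G1 i j k p := by
      simp [pd_coord, mul_ite]
    have h2 : (∑ m, G1 i k m p * pd j (fun q => q m) p) = G1 i k j p := by
      simp [pd_coord, mul_ite]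
    have h3 : (∑ m, G1 m k j p * pd m (fun q => q i) p) = G1 i k j p := by
      simp [pd_coord, mul_ite]
    rw [h1, h2, h3]; ring
  constructor
  · intro hc p i k j
    rw [key]
    by_cases hji : j = i
    · by_cases hki : k = i
      · -- j = i, k = i
        have hG : G1 i k j = fun q => -∑ m ∈ Finset.univ.erase i, γ i m q := by
          funext q; rw [hG1]; simp [hji, hki]
        have hpd : ∀ l : Fin n,
            pd l (fun q => -∑ m ∈ Finset.univ.erase i, γ i m q) p
              = -∑ m ∈ Finset.univ.erase i, pd l (γ i m) p := by
          intro l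
          rw [pd_neg l (fun q => ∑ m ∈ Finset.univ.erase i, γ i m q) p,
            pd_sum l _ _ p (fun m _ => (hdiff i m).differentiableAt)]
        have hsum : (∑ l, p l * pd l (G1 i k j) p)
            = ∑ m ∈ Finset.univ.erase i, γ i m p := by
          rw [hG]
          calc (∑ l, p l * pd l (fun q => -∑ m ∈ Finset.univ.erase i, γ i m q) p)
              = ∑ l : Fin n, -∑ m ∈ Finset.univ.erase i, p l * pd l (γ i m) p := by
                refine Finset.sum_congr rfl fun l _ => ?_
                rw [hpd l, mul_neg, Finset.mul_sum]
            _ = -∑ l : Fin n, ∑ m ∈ Finset.univ.erase i, p l * pd l (γ i m) p :=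
                Finset.sum_neg_distrib _
            _ = -∑ m ∈ Finset.univ.erase i, ∑ l : Fin n, p l * pd l (γ i m) p := by
                rw [Finset.sum_comm]
            _ = -∑ m ∈ Finset.univ.erase i, -(γ i m p) := by
                refine congrArg Neg.neg (Finset.sum_congr rfl fun m hm => ?_)
                exact hc p i m fun h => (Finset.mem_erase.mp hm).1 h.symm
            _ = ∑ m ∈ Finset.univ.erase i, γ i m p := by
                rw [← Finset.sum_neg_distrib]; simp
        rw [hsum, hG1, if_pos ⟨hji, hki⟩]
        ring
      · -- j = i, k ≠ i
        have hG : G1 i k j = γ i k := by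
          funext q; rw [hG1]; simp [hji, hki]
        rw [hG, hc p i k fun h => hki h.symm, hG1]
        simp [hji, hki]
    · by_cases hki : k = i
      · -- k = i, j ≠ i
        have hG : G1 i k j = γ i j := by
          funext q; rw [hG1]; simp [hji, hki]
        rw [hG, hc p i j fun h => hji h.symm, hG1]
        simp [hji, hki]
      · by_cases hjk : j = k
        · -- j = k, both ≠ i
          subst hjk
          have hG : G1 i j j = fun q => -(γ i j q) := by
            funext q; rw [hG1]; simp [hji]
          have hsum : (∑ l, p l * pd l (G1 i j j) p) = γ i j p := by
            rw [hG]
            calc (∑ l, p l * pd l (fun q => -(γ i j q)) p)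
                = ∑ l : Fin n, -(p l * pd l (γ i j) p) := by
                  refine Finset.sum_congr rfl fun l _ => ?_
                  rw [pd_neg, mul_neg]
              _ = -∑ l : Fin n, p l * pd l (γ i j) p := Finset.sum_neg_distrib _
              _ = γ i j p := by rw [hc p i j fun h => hji h.symm, neg_neg]
          rw [hsum, hG1]
          simp [hji]
        · -- i, j, k pairwise distinct
          have hkj : ¬k = j := fun h => hjk h.symm
          have hG : G1 i k j = fun _ => (0:ℂ) := by
            funext q; rw [hG1]; simp [hji, hki, hkj]
          rw [hG, hG1]
          simp [hji, hki, hjk, pd_const]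
  · intro h p i k hik
    have hkey := h p i k i
    rw [key] at hkey
    have e1 : G1 i i k p = γ i k p := by
      rw [hG1]; simp [hik.symm]
    have e2 : G1 i k i = γ i k := by
      funext q; rw [hG1]; simp [hik.symm]
    rw [e1, e2] at hkey
    linear_combination hkey
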